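/- Let p be a prime, d ≥ 2, n ≥ 1, and let H be a finite-index additive subgroup of ℤ_p^d such that the quotient group ℤ_p^d/H is cyclic of order p^{n−1}. Then there exist two distinct additive subgroups H₁ ≠ H₂ of ℤ_p^d, both contained in H with [H : Hᵢ] = p, such that both quotients ℤ_p^d/H₁ and ℤ_p^d/H₂ are cyclic (of order p^n), and for every additive subgroup K of ℤ_p^d one has H₁ ⊊ K if and only if H₂ ⊊ K (i.e., the sets of subgroups strictly containing H₁ and strictly containing H₂ coincide). -/

import Mathlib

open PadicInt

namespace LinkedCovers

variable {p : ℕ} [Fact p.Prime] {d : ℕ}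

lemma neZero_ppow (m : ℕ) : NeZero (p ^ m) :=
  ⟨pow_ne_zero m (Fact.out (p := p.Prime)).pos.ne'⟩

lemma toZModPow_appr (k : ℕ) (c : ℤ_[p]) :
    toZModPow k c = ((c.appr k : ℕ) : ZMod (p ^ k)) := by
  have h : toZModPow k (c - ((c.appr k : ℕ) : ℤ_[p])) = 0 := by
    rw [← RingHom.mem_ker, PadicInt.ker_toZModPow]
    exact PadicInt.appr_spec k c
  rw [map_sub, map_natCast, sub_eq_zero] at h
  exact h

/-- Every additive hom from `ℤ_p^d` to `ZMod (p^k)` is "linear" on singles. -/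
lemma hom_single (k : ℕ) (f : (Fin d → ℤ_[p]) →+ ZMod (p ^ k)) (i : Fin d) (c : ℤ_[p]) :
    f (Pi.single i c) = toZModPow k c * f (Pi.single i 1) := by
  obtain ⟨u, hu⟩ := Ideal.mem_span_singleton.mp (PadicInt.appr_spec k c)
  have hc2 : c = (c.appr k) • (1 : ℤ_[p]) + (p ^ k) • u := by
    rw [nsmul_eq_mul, nsmul_eq_mul, mul_one]
    push_cast
    linear_combination hu
  have h1 : Pi.single i c
      = (c.appr k) • Pi.single i (1 : ℤ_[p]) + (p ^ k) • (Pi.single i u : Fin d → ℤ_[p]) := by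
    rw [← Pi.single_smul, ← Pi.single_smul, ← Pi.single_add, ← hc2]
  rw [h1, map_add, map_nsmul, map_nsmul, nsmul_eq_mul, nsmul_eq_mul, toZModPow_appr]
  have h2 : ((p : ZMod (p ^ k))) ^ k = 0 := by
    have h := ZMod.natCast_self (p ^ k); push_cast at h; exact h
  push_cast
  rw [h2, zero_mul, add_zero]

lemma hom_apply (k : ℕ) (f : (Fin d → ℤ_[p]) →+ ZMod (p ^ k)) (x : Fin d → ℤ_[p]) :
    f x = ∑ i, toZModPow k (x i) * f (Pi.single i 1) := by
  conv_lhs => rw [← Finset.univ_sum_single x]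
  rw [map_sum]
  exact Finset.sum_congr rfl fun i _ => hom_single k f i (x i)

/-- The additive hom `x ↦ ∑ i, (x i mod p^m) * b i`. -/
noncomputable def psi (m : ℕ) (b : Fin d → ZMod (p ^ m)) : (Fin d → ℤ_[p]) →+ ZMod (p ^ m) where
  toFun x := ∑ i, toZModPow m (x i) * b i
  map_zero' := by simp
  map_add' x y := by
    simp only [Pi.add_apply, map_add, add_mul, Finset.sum_add_distrib]

lemma psi_apply (m : ℕ) (b : Fin d → ZMod (p ^ m)) (x : Fin d → ℤ_[p]) :
    psi m b x = ∑ i, toZModPow m (x i) * b i := rfl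

lemma psi_single (m : ℕ) (b : Fin d → ZMod (p ^ m)) (i : Fin d) (c : ℤ_[p]) :
    psi m b (Pi.single i c) = toZModPow m c * b i := by
  rw [psi_apply, Finset.sum_eq_single i]
  · rw [Pi.single_eq_same]
  · intro j _ hj
    rw [Pi.single_eq_of_ne hj, map_zero, zero_mul]
  · intro h; exact absurd (Finset.mem_univ i) h

lemma psi_surjective (m : ℕ) (b : Fin d → ZMod (p ^ m)) (i₀ : Fin d) (hb : IsUnit (b i₀)) :
    Function.Surjective (psi m b) := by
  haveI := neZero_ppow (p := p) m
  obtain ⟨u, hu⟩ := hb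
  intro t
  refine ⟨Pi.single i₀ ((((↑u⁻¹ : ZMod (p ^ m)) * t).val : ℕ) : ℤ_[p]), ?_⟩
  rw [psi_single, map_natCast, ZMod.natCast_rightInverse _, ← hu,
    mul_comm (↑u⁻¹ : ZMod (p ^ m)) t, mul_assoc, Units.inv_mul, mul_one]

lemma exists_mul_of_cast_eq_zero (k : ℕ) (t z : ZMod (p ^ (k + 1))) (ht : t ≠ 0)
    (hz : ZMod.castHom (pow_dvd_pow p (Nat.le_succ k)) (ZMod (p ^ k)) z = 0) :
    ∃ c : ZMod (p ^ (k + 1)), z = c * t := by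
  haveI := neZero_ppow (p := p) (k + 1)
  haveI := neZero_ppow (p := p) k
  have hp : p.Prime := Fact.out
  set T := t.val with hT
  have hT0 : T ≠ 0 := fun h => ht ((ZMod.val_eq_zero t).mp h)
  have hndvd : ¬ p ^ (k + 1) ∣ T :=
    fun h => absurd (Nat.le_of_dvd (Nat.pos_of_ne_zero hT0) h) (not_le.mpr (ZMod.val_lt t))
  set s := padicValNat p T with hs
  have hsk : s ≤ k := by
    by_contra h
    push_neg at h
    exact hndvd ((pow_dvd_pow p h).trans pow_padicValNat_dvd)
  set T' := T / p ^ s with hT'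
  have hTT' : p ^ s * T' = T := Nat.mul_div_cancel' pow_padicValNat_dvd
  have hpT' : ¬ p ∣ T' := by
    intro hdvd
    apply pow_succ_padicValNat_not_dvd (p := p) hT0
    rw [← hs, ← hTT', pow_succ]
    exact mul_dvd_mul dvd_rfl hdvd
  have hcop : Nat.Coprime T' (p ^ (k + 1)) :=
    (((Nat.Prime.coprime_iff_not_dvd hp).mpr hpT').symm).pow_right _
  have hunit : IsUnit ((T' : ZMod (p ^ (k + 1)))) :=
    (ZMod.isUnit_iff_coprime T' (p ^ (k + 1))).mpr hcop
  obtain ⟨u, hu⟩ := hunit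
  have ht' : t = (p : ZMod (p ^ (k + 1))) ^ s * ↑u := by
    rw [hu]
    calc t = ((p ^ s * T' : ℕ) : ZMod (p ^ (k + 1))) := by
            rw [hTT']; exact (ZMod.natCast_rightInverse t).symm
      _ = (p : ZMod (p ^ (k + 1))) ^ s * (T' : ZMod (p ^ (k + 1))) := by push_cast; ring
  have hzv : p ^ k ∣ z.val := by
    rw [← ZMod.natCast_eq_zero_iff]
    rw [ZMod.castHom_apply, ← ZMod.natCast_val] at hz
    exact hz
  obtain ⟨Z, hZ⟩ := hzv
  have hz' : z = (p : ZMod (p ^ (k + 1))) ^ k * (Z : ZMod (p ^ (k + 1))) := by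
    calc z = ((p ^ k * Z : ℕ) : ZMod (p ^ (k + 1))) := by
            rw [← hZ]; exact (ZMod.natCast_rightInverse z).symm
      _ = _ := by push_cast; ring
  refine ⟨(p : ZMod (p ^ (k + 1))) ^ (k - s) * (Z : ZMod (p ^ (k + 1))) * ↑u⁻¹, ?_⟩
  rw [ht', hz']
  symm
  have hps : (p : ZMod (p ^ (k + 1))) ^ (k - s) * (p : ZMod (p ^ (k + 1))) ^ s
      = (p : ZMod (p ^ (k + 1))) ^ k := by
    rw [← pow_add, Nat.sub_add_cancel hsk]
  calc (p : ZMod (p ^ (k + 1))) ^ (k - s) * (Z : ZMod (p ^ (k + 1))) * ↑u⁻¹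
        * ((p : ZMod (p ^ (k + 1))) ^ s * ↑u)
      = ((p : ZMod (p ^ (k + 1))) ^ (k - s) * (p : ZMod (p ^ (k + 1))) ^ s)
        * (Z : ZMod (p ^ (k + 1))) * ((↑u⁻¹ : ZMod (p ^ (k + 1))) * ↑u) := by ring
    _ = (p : ZMod (p ^ (k + 1))) ^ k * (Z : ZMod (p ^ (k + 1))) := by
        rw [hps, Units.inv_mul, mul_one]

lemma lt_of_ker_lt (k : ℕ) (H B : AddSubgroup (Fin d → ℤ_[p]))
    (ψ : (Fin d → ℤ_[p]) →+ ZMod (p ^ (k + 1)))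
    (hψH : ∀ h ∈ H, ZMod.castHom (pow_dvd_pow p (Nat.le_succ k)) (ZMod (p ^ k)) (ψ h) = 0)
    (hBH : B ≤ H) (hBne : B ≠ H) (K : AddSubgroup (Fin d → ℤ_[p]))
    (hK : ψ.ker < K) : B < K := by
  haveI := neZero_ppow (p := p) (k + 1)
  obtain ⟨x, hxK, hxA⟩ := SetLike.exists_of_lt hK
  have hx0 : ψ x ≠ 0 := fun h => hxA (AddMonoidHom.mem_ker.mpr h)
  have hHK : H ≤ K := by
    intro h hh
    obtain ⟨c, hc⟩ := exists_mul_of_cast_eq_zero k (ψ x) (ψ h) hx0 (hψH h hh)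
    have h1 : h - c.val • x ∈ ψ.ker := by
      rw [AddMonoidHom.mem_ker, map_sub, map_nsmul, nsmul_eq_mul,
        ZMod.natCast_rightInverse _, ← hc, sub_self]
    have h2 : h = (h - c.val • x) + c.val • x := by abel
    rw [h2]
    exact K.add_mem (hK.le h1) (K.nsmul_mem hxK _)
  refine lt_of_le_of_ne (hBH.trans hHK) fun hEq => hBne (le_antisymm hBH ?_)
  rw [hEq]
  exact hHK

lemma exists_lift (k : ℕ) (hd : 0 < d) (A : (Fin d → ℤ_[p]) →+ ZMod (p ^ k))
    (hAsurj : Function.Surjective A) :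
    ∃ b : Fin d → ZMod (p ^ (k + 1)),
      (∀ i, ZMod.castHom (pow_dvd_pow p (Nat.le_succ k)) (ZMod (p ^ k)) (b i)
        = A (Pi.single i 1)) ∧ ∃ i₀, IsUnit (b i₀) := by
  haveI := neZero_ppow (p := p) (k + 1)
  haveI := neZero_ppow (p := p) k
  have hp : p.Prime := Fact.out
  rcases Nat.eq_zero_or_pos k with hk | hk
  · subst hk
    haveI : Subsingleton (ZMod (p ^ 0)) := by rw [pow_zero]; infer_instance
    exact ⟨fun _ => 1, fun i => Subsingleton.elim _ _, ⟨⟨0, hd⟩, isUnit_one⟩⟩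
  · -- k ≥ 1 : some a i is a unit
    have hex : ∃ i₀, IsUnit (A (Pi.single i₀ 1)) := by
      by_contra hno
      push_neg at hno
      have hdiv : ∀ i, ∃ c : ZMod (p ^ k), A (Pi.single i 1) = (p : ZMod (p ^ k)) * c := by
        intro i
        set a := A (Pi.single i 1) with ha
        have hpd : p ∣ a.val := by
          by_contra hpd
          apply hno i
          have : Nat.Coprime a.val (p ^ k) :=
            (((Nat.Prime.coprime_iff_not_dvd hp).mpr hpd).symm).pow_right _
          have := (ZMod.isUnit_iff_coprime a.val (p ^ k)).mpr this
          rwa [ZMod.natCast_rightInverse _] at this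
        obtain ⟨q, hq⟩ := hpd
        refine ⟨(q : ZMod (p ^ k)), ?_⟩
        calc a = ((a.val : ℕ) : ZMod (p ^ k)) := (ZMod.natCast_rightInverse a).symm
          _ = ((p * q : ℕ) : ZMod (p ^ k)) := by rw [← hq]
          _ = (p : ZMod (p ^ k)) * (q : ZMod (p ^ k)) := by push_cast; ring
      choose cf hcf using hdiv
      obtain ⟨x, hx⟩ := hAsurj 1
      have h1 : (1 : ZMod (p ^ k))
          = (p : ZMod (p ^ k)) * ∑ i, toZModPow k (x i) * cf i := by
        rw [← hx, hom_apply k A x, Finset.mul_sum]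
        exact Finset.sum_congr rfl fun i _ => by rw [hcf i]; ring
      have hpu : IsUnit ((p : ZMod (p ^ k))) := IsUnit.of_mul_eq_one _ h1.symm
      have hcp : Nat.Coprime p (p ^ k) := (ZMod.isUnit_iff_coprime p (p ^ k)).mp hpu
      have : p = 1 := hcp.eq_one_of_dvd (dvd_pow_self p hk.ne')
      exact hp.one_lt.ne' this
    obtain ⟨i₀, hi₀⟩ := hex
    refine ⟨fun i => (((A (Pi.single i 1)).val : ℕ) : ZMod (p ^ (k + 1))), fun i => ?_,
      i₀, ?_⟩
    · rw [map_natCast, ZMod.natCast_rightInverse _]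
    · set a := A (Pi.single i₀ 1) with ha
      have h1 : Nat.Coprime a.val (p ^ k) := by
        rw [← ZMod.isUnit_iff_coprime, ZMod.natCast_rightInverse _]
        exact hi₀
      have h2 : Nat.Coprime a.val p := (Nat.coprime_pow_right_iff hk a.val p).mp h1
      exact (ZMod.isUnit_iff_coprime a.val (p ^ (k + 1))).mpr (h2.pow_right _)

end LinkedCovers

open LinkedCovers

/-- Let p be a prime, d ≥ 2, n ≥ 1, and H a finite-index additive subgroup of ℤ_p^d
whose quotient is cyclic of order p^(n-1). Then there are two distinct index-p subgroups
H₁ ≠ H₂ of H with cyclic quotients ℤ_p^d/Hᵢ of order p^n, such that the sets of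
subgroups strictly containing H₁ and strictly containing H₂ coincide. -/
theorem exists_linked_cyclic_covers
    (p : ℕ) [Fact p.Prime] (d n : ℕ) (hd : 2 ≤ d) (hn : 1 ≤ n)
    (H : AddSubgroup (Fin d → ℤ_[p])) (hH : H.index ≠ 0)
    (hcyc : IsAddCyclic ((Fin d → ℤ_[p]) ⧸ H))
    (hcard : Nat.card ((Fin d → ℤ_[p]) ⧸ H) = p ^ (n - 1)) :
    ∃ H₁ H₂ : AddSubgroup (Fin d → ℤ_[p]), H₁ ≠ H₂ ∧ H₁ ≤ H ∧ H₂ ≤ H ∧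
      (H₁.addSubgroupOf H).index = p ∧ (H₂.addSubgroupOf H).index = p ∧
      IsAddCyclic ((Fin d → ℤ_[p]) ⧸ H₁) ∧ IsAddCyclic ((Fin d → ℤ_[p]) ⧸ H₂) ∧
      Nat.card ((Fin d → ℤ_[p]) ⧸ H₁) = p ^ n ∧ Nat.card ((Fin d → ℤ_[p]) ⧸ H₂) = p ^ n ∧
      ∀ K : AddSubgroup (Fin d → ℤ_[p]), H₁ < K ↔ H₂ < K := by
  have hp : p.Prime := Fact.out
  obtain ⟨k, rfl⟩ : ∃ k, n = k + 1 := ⟨n - 1, (Nat.succ_pred_eq_of_pos hn).symm⟩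
  simp only [Nat.add_sub_cancel] at hcard ⊢
  haveI := neZero_ppow (p := p) (k + 1)
  haveI := neZero_ppow (p := p) k
  -- the hom to `ZMod (p^k)` with kernel `H`
  have e : ((Fin d → ℤ_[p]) ⧸ H) ≃+ ZMod (p ^ k) := hcard ▸ (zmodAddCyclicAddEquiv hcyc).symm
  set A : (Fin d → ℤ_[p]) →+ ZMod (p ^ k) :=
    e.toAddMonoidHom.comp (QuotientAddGroup.mk' H) with hA
  have hAsurj : Function.Surjective A :=
    e.surjective.comp (QuotientAddGroup.mk'_surjective H)
  have hAker : ∀ x, A x = 0 ↔ x ∈ H := by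
    intro x
    have : A x = e ((QuotientAddGroup.mk' H) x) := rfl
    rw [this, AddEquiv.map_eq_zero_iff, QuotientAddGroup.mk'_apply,
      QuotientAddGroup.eq_zero_iff]
  -- lift to two homs to `ZMod (p^(k+1))`
  obtain ⟨b, hbcast, i₀, hbU⟩ := exists_lift k (by omega) A hAsurj
  haveI : Nontrivial (Fin d) := Fin.nontrivial_iff_two_le.mpr hd
  obtain ⟨j, hj⟩ := exists_ne i₀
  set b' : Fin d → ZMod (p ^ (k + 1)) :=
    Function.update b j (b j + (p : ZMod (p ^ (k + 1))) ^ k) with hb'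
  have hb'cast : ∀ i, ZMod.castHom (pow_dvd_pow p (Nat.le_succ k)) (ZMod (p ^ k)) (b' i)
      = A (Pi.single i 1) := by
    intro i
    by_cases hi : i = j
    · subst hi
      rw [hb', Function.update_self, map_add, hbcast i, map_pow, map_natCast]
      have h0 : ((p : ZMod (p ^ k))) ^ k = 0 := by
        have h := ZMod.natCast_self (p ^ k); push_cast at h; exact h
      rw [h0, add_zero]
    · rw [hb', Function.update_of_ne hi, hbcast i]
  have hb'U : IsUnit (b' i₀) := by
    rw [hb', Function.update_of_ne (Ne.symm hj)]
    exact hbU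
  set ψ₁ := psi (k + 1) b with hψ₁def
  set ψ₂ := psi (k + 1) b' with hψ₂def
  -- compatibility with A
  have hcastψ : ∀ (bb : Fin d → ZMod (p ^ (k + 1))),
      (∀ i, ZMod.castHom (pow_dvd_pow p (Nat.le_succ k)) (ZMod (p ^ k)) (bb i)
        = A (Pi.single i 1)) →
      ∀ x, ZMod.castHom (pow_dvd_pow p (Nat.le_succ k)) (ZMod (p ^ k)) (psi (k + 1) bb x)
        = A x := by
    intro bb hbb x
    rw [psi_apply, map_sum, hom_apply k A x]
    refine Finset.sum_congr rfl fun i _ => ?_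
    rw [map_mul, hbb i]
    congr 1
    rw [ZMod.castHom_apply, PadicInt.cast_toZModPow k (k + 1) (Nat.le_succ k)]
  have hker₁H : ψ₁.ker ≤ H := fun x hx => (hAker x).mp (by
    rw [← hcastψ b hbcast x, AddMonoidHom.mem_ker.mp hx, map_zero])
  have hker₂H : ψ₂.ker ≤ H := fun x hx => (hAker x).mp (by
    rw [← hcastψ b' hb'cast x, AddMonoidHom.mem_ker.mp hx, map_zero])
  have hψ₁H : ∀ h ∈ H, ZMod.castHom (pow_dvd_pow p (Nat.le_succ k)) (ZMod (p ^ k)) (ψ₁ h)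
      = 0 := fun h hh => by rw [hcastψ b hbcast h]; exact (hAker h).mpr hh
  have hψ₂H : ∀ h ∈ H, ZMod.castHom (pow_dvd_pow p (Nat.le_succ k)) (ZMod (p ^ k)) (ψ₂ h)
      = 0 := fun h hh => by rw [hcastψ b' hb'cast h]; exact (hAker h).mpr hh
  -- surjectivity and quotient structure
  have hsurj₁ : Function.Surjective ψ₁ := psi_surjective _ b i₀ hbU
  have hsurj₂ : Function.Surjective ψ₂ := psi_surjective _ b' i₀ hb'U
  have q₁ : ((Fin d → ℤ_[p]) ⧸ ψ₁.ker) ≃+ ZMod (p ^ (k + 1)) :=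
    QuotientAddGroup.quotientKerEquivOfSurjective ψ₁ hsurj₁
  have q₂ : ((Fin d → ℤ_[p]) ⧸ ψ₂.ker) ≃+ ZMod (p ^ (k + 1)) :=
    QuotientAddGroup.quotientKerEquivOfSurjective ψ₂ hsurj₂
  have hcard₁ : Nat.card ((Fin d → ℤ_[p]) ⧸ ψ₁.ker) = p ^ (k + 1) := by
    rw [Nat.card_congr q₁.toEquiv, Nat.card_zmod]
  have hcard₂ : Nat.card ((Fin d → ℤ_[p]) ⧸ ψ₂.ker) = p ^ (k + 1) := by
    rw [Nat.card_congr q₂.toEquiv, Nat.card_zmod]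
  have hcyc₁ : IsAddCyclic ((Fin d → ℤ_[p]) ⧸ ψ₁.ker) :=
    isAddCyclic_of_surjective q₁.symm.toAddMonoidHom q₁.symm.surjective
  have hcyc₂ : IsAddCyclic ((Fin d → ℤ_[p]) ⧸ ψ₂.ker) :=
    isAddCyclic_of_surjective q₂.symm.toAddMonoidHom q₂.symm.surjective
  -- indices
  have hHidx : H.index = p ^ k := by rw [AddSubgroup.index_eq_card, hcard]
  have hidx : ∀ (ψ : (Fin d → ℤ_[p]) →+ ZMod (p ^ (k + 1))),
      Nat.card ((Fin d → ℤ_[p]) ⧸ ψ.ker) = p ^ (k + 1) → ψ.ker.index = p ^ (k + 1) :=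
    fun ψ h => by rw [AddSubgroup.index_eq_card, h]
  have hrel : ∀ (N : AddSubgroup (Fin d → ℤ_[p])), N ≤ H → N.index = p ^ (k + 1) →
      (N.addSubgroupOf H).index = p := by
    intro N hNH hNidx
    have h1 := AddSubgroup.relIndex_mul_index hNH
    rw [hHidx, hNidx] at h1
    have h2 : N.relIndex H * p ^ k = p * p ^ k := by
      rw [h1, pow_succ]; ring
    exact Nat.eq_of_mul_eq_mul_right (pow_pos hp.pos k) h2
  have hrel₁ : (ψ₁.ker.addSubgroupOf H).index = p :=
    hrel _ hker₁H (hidx ψ₁ hcard₁)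
  have hrel₂ : (ψ₂.ker.addSubgroupOf H).index = p :=
    hrel _ hker₂H (hidx ψ₂ hcard₂)
  have hkerneH : ∀ (N : AddSubgroup (Fin d → ℤ_[p])), N.index = p ^ (k + 1) → N ≠ H := by
    intro N hNidx hEq
    rw [hEq, hHidx] at hNidx
    have := Nat.pow_right_injective hp.two_le hNidx
    omega
  have hne₁H : ψ₁.ker ≠ H := hkerneH _ (hidx ψ₁ hcard₁)
  have hne₂H : ψ₂.ker ≠ H := hkerneH _ (hidx ψ₂ hcard₂)
  -- the distinguishing element
  obtain ⟨u, hu⟩ := hbU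
  set w : ℕ := (((↑u⁻¹ : ZMod (p ^ (k + 1))) * b j)).val with hw
  set X : Fin d → ℤ_[p] := Pi.single j 1 - Pi.single i₀ ((w : ℕ) : ℤ_[p]) with hX
  have hmain : ((↑u⁻¹ : ZMod (p ^ (k + 1))) * b j) * ↑u = b j := by
    rw [mul_comm (↑u⁻¹ : ZMod (p ^ (k + 1))) (b j), mul_assoc, Units.inv_mul, mul_one]
  have hwcast : ((w : ℕ) : ZMod (p ^ (k + 1))) = (↑u⁻¹ : ZMod (p ^ (k + 1))) * b j :=
    ZMod.natCast_rightInverse _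
  have hX1 : ψ₁ X = 0 := by
    rw [hX, map_sub, psi_single, psi_single, map_one, map_natCast, one_mul, hwcast,
      ← hu, hmain, sub_self]
  have hX2 : ψ₂ X = (p : ZMod (p ^ (k + 1))) ^ k := by
    rw [hX, map_sub, psi_single, psi_single, map_one, map_natCast, one_mul, hwcast]
    rw [hb', Function.update_self, Function.update_of_ne (Ne.symm hj), ← hu, hmain]
    ring
  have hpk0 : ((p : ZMod (p ^ (k + 1)))) ^ k ≠ 0 := by
    have h1 : ((p ^ k : ℕ) : ZMod (p ^ (k + 1))) ≠ 0 := by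
      rw [Ne, ZMod.natCast_eq_zero_iff]
      intro hdvd
      exact absurd (Nat.le_of_dvd (pow_pos hp.pos k) hdvd)
        (not_le.mpr (Nat.pow_lt_pow_right hp.one_lt (Nat.lt_succ_self k)))
    push_cast at h1
    exact h1
  have hne : ψ₁.ker ≠ ψ₂.ker := by
    intro hEq
    have hX₂0 : X ∈ ψ₂.ker := hEq ▸ AddMonoidHom.mem_ker.mpr hX1
    rw [AddMonoidHom.mem_ker, hX2] at hX₂0
    exact hpk0 hX₂0
  refine ⟨ψ₁.ker, ψ₂.ker, hne, hker₁H, hker₂H, hrel₁, hrel₂, hcyc₁, hcyc₂, hcard₁, hcard₂,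
    fun K => ⟨fun h => ?_, fun h => ?_⟩⟩
  · exact lt_of_ker_lt k H ψ₂.ker ψ₁ hψ₁H hker₂H hne₂H K h
  · exact lt_of_ker_lt k H ψ₁.ker ψ₂ hψ₂H hker₁H hne₁H K h
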